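/- arXiv:1702.01973 — 5 statements merged into one kernel-verified Lean document; each statement's English description precedes it below -/
import Mathlib

section
/- For every real α > 2, reals β ≥ 1, ε > 0, and every positive integer k, there exists a natural number d ≥ 1 (depending only on α, β, ε and k) with the following property. For all reals P > 0, 𝒩 > 0 and x > 0 satisfying √2·x ≤ (P/((1+ε)·β·𝒩))^(1/α), let T be a finite set of stations in ℝ² containing at most k stations in each box of the grid G_x, and let u ∈ T be a station such that every station w ∈ T with w ≠ u lies in a box at box-distance at least d from the box of u (in particular no other station of T lies in u's box). Then for every point v ∈ ℝ² with 0 < dist(u,v) ≤ √2·x, one has SINR(u,v,T) ≥ β and P/dist(u,v)^α ≥ (1+ε)·β·𝒩; that is, v successfully receives u's message when the stations of T transmit simultaneously. -/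
noncomputable section
open scoped Classical

/-- Points of the Euclidean plane. -/
abbrev Pt := EuclideanSpace ℝ (Fin 2)

/-- The grid coordinates of the box of the grid `G_x` containing a point `p`:
the box with coordinates `(a,b)` is `[a·x,(a+1)·x) × [b·x,(b+1)·x)`. -/
def gridCoord (x : ℝ) (p : Pt) : ℤ × ℤ := (⌊p 0 / x⌋, ⌊p 1 / x⌋)

/-- The box-distance between the boxes with grid coordinates `c₁` and `c₂`:
`max (0, max (|a₁−a₂|, |b₁−b₂|) − 1)`. -/
def boxDist (c₁ c₂ : ℤ × ℤ) : ℕ :=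
  (max |c₁.1 - c₂.1| |c₁.2 - c₂.2| - 1).toNat

lemma floor_abs_sub_le (s t : ℝ) : (|⌊s⌋ - ⌊t⌋| : ℝ) - 1 ≤ |s - t| := by
  have h1 : (⌊s⌋ : ℝ) ≤ s := Int.floor_le s
  have h2 : t - 1 < (⌊t⌋ : ℝ) := Int.sub_one_lt_floor t
  have h3 : (⌊t⌋ : ℝ) ≤ t := Int.floor_le t
  have h4 : s - 1 < (⌊s⌋ : ℝ) := Int.sub_one_lt_floor s
  have habs : (|⌊s⌋ - ⌊t⌋| : ℝ) = |(⌊s⌋ : ℝ) - (⌊t⌋ : ℝ)| := by push_cast; ring_nf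
  rw [habs]
  rcases abs_cases ((⌊s⌋ : ℝ) - (⌊t⌋ : ℝ)) with ⟨he, _⟩ | ⟨he, _⟩ <;>
  rcases abs_cases (s - t) with ⟨hf, _⟩ | ⟨hf, _⟩ <;> linarith

lemma coord_le_dist (p q : Pt) (i : Fin 2) : |p i - q i| ≤ dist p q := by
  rw [EuclideanSpace.dist_eq, show |p i - q i| = Real.sqrt (dist (p i) (q i) ^ 2) by
    rw [Real.sqrt_sq dist_nonneg, Real.dist_eq]]
  exact Real.sqrt_le_sqrt <| Finset.single_le_sum
    (f := fun j => dist (p j) (q j) ^ 2) (fun j _ => sq_nonneg _) (Finset.mem_univ i)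

lemma grid_sep {x : ℝ} (hx : 0 < x) (p q : Pt) :
    x * ((max |(gridCoord x p).1 - (gridCoord x q).1|
        |(gridCoord x p).2 - (gridCoord x q).2| : ℤ) : ℝ) - x ≤ dist p q := by
  have key : ∀ i : Fin 2, ∀ m : ℤ,
      m = |⌊p i / x⌋ - ⌊q i / x⌋| → x * (m : ℝ) - x ≤ dist p q := by
    intro i m hm
    have h1 : ((m : ℝ)) - 1 ≤ |p i / x - q i / x| := by
      rw [hm]; exact_mod_cast floor_abs_sub_le (p i / x) (q i / x)
    have h2 : |p i / x - q i / x| = |p i - q i| / x := by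
      rw [div_sub_div_same, abs_div, abs_of_pos hx]
    have h3 : x * ((m : ℝ) - 1) ≤ |p i - q i| := by
      rw [h2] at h1
      calc x * ((m : ℝ) - 1) ≤ x * (|p i - q i| / x) :=
            mul_le_mul_of_nonneg_left h1 hx.le
        _ = |p i - q i| := by field_simp
    calc x * (m : ℝ) - x = x * ((m : ℝ) - 1) := by ring
      _ ≤ |p i - q i| := h3
      _ ≤ dist p q := coord_le_dist p q i
  rcases max_cases |(gridCoord x p).1 - (gridCoord x q).1|
      |(gridCoord x p).2 - (gridCoord x q).2| with ⟨he, _⟩ | ⟨he, _⟩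
  · rw [he]; exact key 0 _ rfl
  · rw [he]; exact key 1 _ rfl

/-- The summable majorant over `ℤ × ℤ`. -/
def Gfun (α : ℝ) : ℤ × ℤ → ℝ :=
  fun c => if c = 0 then (0:ℝ) else ((max |c.1| |c.2| : ℤ) : ℝ) ^ (-α)

lemma Gfun_nonneg (α : ℝ) (c : ℤ × ℤ) : 0 ≤ Gfun α c := by
  unfold Gfun; split_ifs
  · exact le_refl 0
  · exact Real.rpow_nonneg (by positivity) _

lemma summable_G {α : ℝ} (hα : 2 < α) : Summable (Gfun α) := by
  set p := α / 2 with hpdef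
  have hp : 1 < p := by rw [hpdef]; linarith
  set f : ℤ → ℝ := fun n => |(n : ℝ)| ^ (-p) + (if n = 0 then (1:ℝ) else 0) with hfdef
  have hf_nonneg : ∀ n, 0 ≤ f n := by
    intro n
    have h := Real.rpow_nonneg (abs_nonneg ((n : ℝ))) (-p)
    rw [hfdef]; dsimp only; split_ifs <;> linarith
  have hf_one : ∀ n : ℤ, n ≠ 0 → f n = |(n:ℝ)| ^ (-p) := by
    intro n hn; rw [hfdef]; simp [hn]
  have hf_zero : f 0 = 1 := by
    rw [hfdef]; simp [Real.zero_rpow (by linarith : -p ≠ 0)]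
  have hone : ∀ n : ℤ, n ≠ 0 → (1:ℝ) ≤ |(n:ℝ)| := by
    intro n hn
    have h1 : (1:ℤ) ≤ |n| := Int.one_le_abs hn
    calc (1:ℝ) ≤ ((|n|:ℤ):ℝ) := by exact_mod_cast h1
      _ = |(n:ℝ)| := by push_cast; ring
  have hf_sum : Summable f :=
    (Real.summable_abs_int_rpow hp).add
      (summable_of_ne_finset_zero (s := ({0} : Finset ℤ)) (by intro b hb; simp at hb ⊢; exact hb))
  have hprod : Summable (fun c : ℤ × ℤ => f c.1 * f c.2) :=
    hf_sum.mul_of_nonneg hf_sum hf_nonneg hf_nonneg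
  refine Summable.of_nonneg_of_le (fun c => Gfun_nonneg α c) (fun c => ?_) hprod
  by_cases hc : c = 0
  · simp only [Gfun, hc, if_pos rfl]
    exact mul_nonneg (hf_nonneg _) (hf_nonneg _)
  rw [Gfun, if_neg hc]
  obtain ⟨a, b⟩ := c
  simp only
  have hab : a ≠ 0 ∨ b ≠ 0 := by
    by_contra h; push_neg at h; exact hc (by simp [Prod.ext_iff, h.1, h.2])
  set N : ℝ := ((max |a| |b| : ℤ) : ℝ) with hNdef
  have hNa : |(a:ℝ)| ≤ N := by rw [hNdef]; push_cast; exact le_max_left _ _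
  have hNb : |(b:ℝ)| ≤ N := by rw [hNdef]; push_cast; exact le_max_right _ _
  by_cases ha : a = 0
  · have hb : b ≠ 0 := by tauto
    have hNe : N = |(b:ℝ)| := by
      rw [hNdef, ha]; push_cast; simp [abs_nonneg]
    rw [hNe, hf_one b hb, ha, hf_zero, one_mul]
    exact Real.rpow_le_rpow_of_exponent_le (hone b hb) (by linarith)
  by_cases hb : b = 0
  · have hNe : N = |(a:ℝ)| := by
      rw [hNdef, hb]; push_cast; simp [abs_nonneg]
    rw [hNe, hf_one a ha, hb, hf_zero, mul_one]
    exact Real.rpow_le_rpow_of_exponent_le (hone a ha) (by linarith)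
  rw [hf_one a ha, hf_one b hb]
  have ha1 := hone a ha
  have hb1 := hone b hb
  have hN1 : (1:ℝ) ≤ N := le_trans ha1 hNa
  have habN : |(a:ℝ)| * |(b:ℝ)| ≤ N ^ (2:ℕ) := by
    calc |(a:ℝ)| * |(b:ℝ)| ≤ N * N := mul_le_mul hNa hNb (by linarith) (by linarith)
      _ = N ^ (2:ℕ) := by ring
  have key : (N ^ (2:ℕ)) ^ (-p) ≤ (|(a:ℝ)| * |(b:ℝ)|) ^ (-p) :=
    Real.rpow_le_rpow_of_nonpos (by positivity) habN (by linarith)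
  calc N ^ (-α) = (N ^ (2:ℕ)) ^ (-p) := by
        rw [← Real.rpow_natCast N 2, ← Real.rpow_mul (by linarith)]
        norm_num [hpdef]; ring_nf
    _ ≤ (|(a:ℝ)| * |(b:ℝ)|) ^ (-p) := key
    _ = |(a:ℝ)| ^ (-p) * |(b:ℝ)| ^ (-p) := Real.mul_rpow (abs_nonneg _) (abs_nonneg _)


set_option maxHeartbeats 1000000 in
/-- **Main dilution lemma.** For every `α > 2`, `β ≥ 1`, `ε > 0` and positive integer `k`,
there is a `d ≥ 1` (depending only on `α, β, ε, k`) such that for all `P, 𝒩, x > 0` with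
`√2·x ≤ (P/((1+ε)·β·𝒩))^(1/α)`, for every finite set `T` of stations with at most `k`
stations per box of the grid `G_x`, and every `u ∈ T` such that every other station of `T`
lies in a box at box-distance at least `d` from the box of `u`, every point `v` with
`0 < dist u v ≤ √2·x` successfully receives `u`'s message: `P/dist(u,v)^α ≥ (1+ε)·β·𝒩`
and `SINR(u,v,T) ≥ β`. -/
theorem ssf_dilution_lemma
    (α β ε : ℝ) (hα : 2 < α) (hβ : 1 ≤ β) (hε : 0 < ε) (k : ℕ) (hk : 0 < k) :
    ∃ d : ℕ, 1 ≤ d ∧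
      ∀ P 𝒩 x : ℝ, 0 < P → 0 < 𝒩 → 0 < x →
        Real.sqrt 2 * x ≤ (P / ((1 + ε) * β * 𝒩)) ^ (1 / α) →
        ∀ T : Finset Pt,
          (∀ ab : ℤ × ℤ, (T.filter (fun p => gridCoord x p = ab)).card ≤ k) →
          ∀ u ∈ T,
            (∀ w ∈ T, w ≠ u → d ≤ boxDist (gridCoord x w) (gridCoord x u)) →
            ∀ v : Pt, 0 < dist u v → dist u v ≤ Real.sqrt 2 * x →
              (1 + ε) * β * 𝒩 ≤ P / dist u v ^ α ∧
              β * (𝒩 + ∑ w ∈ T.erase u, P / dist w v ^ α) ≤ P / dist u v ^ α := by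
  have hα0 : (0:ℝ) < α := by linarith
  have hG_sum : Summable (Gfun α) := summable_G hα
  have hk' : (0:ℝ) < (k:ℝ) := by exact_mod_cast hk
  have h1ε : (0:ℝ) < 1 + ε := by linarith
  have hβ0 : (0:ℝ) < β := by linarith
  have hs2 : (0:ℝ) < Real.sqrt 2 := Real.sqrt_pos.2 (by norm_num)
  set δ : ℝ := ε / ((1+ε) * β * k * ((2:ℝ)^α * (Real.sqrt 2)^α)) with hδdef
  have h2α : (0:ℝ) < (2:ℝ)^α := Real.rpow_pos_of_pos (by norm_num) α
  have hs2α : (0:ℝ) < (Real.sqrt 2)^α := Real.rpow_pos_of_pos hs2 α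
  have hδpos : 0 < δ := by rw [hδdef]; positivity
  obtain ⟨s₀, hs₀⟩ := Filter.eventually_atTop.1
    ((tendsto_order.1 (tendsto_tsum_compl_atTop_zero (Gfun α))).2 δ hδpos)
  have htail : ∑' (c : {c : ℤ × ℤ // c ∉ s₀}), Gfun α c < δ := hs₀ s₀ le_rfl
  set M : ℕ := s₀.sup (fun c => (max |c.1| |c.2|).toNat) with hMdef
  refine ⟨4 + M, by omega, ?_⟩
  intro P 𝒩 x hP h𝒩 hx hrange T hbox u huT hfar v hD hvle
  have hDα : (0:ℝ) < dist u v ^ α := Real.rpow_pos_of_pos hD α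
  have hQ : (0:ℝ) < (1+ε) * β * 𝒩 := by positivity
  have hsx : (0:ℝ) < Real.sqrt 2 * x := by positivity
  have hpow : (Real.sqrt 2 * x) ^ α ≤ P / ((1+ε) * β * 𝒩) := by
    calc (Real.sqrt 2 * x) ^ α ≤ ((P / ((1+ε)*β*𝒩)) ^ (1/α)) ^ α :=
          Real.rpow_le_rpow hsx.le hrange hα0.le
      _ = P / ((1+ε)*β*𝒩) := by
          rw [← Real.rpow_mul (div_nonneg hP.le hQ.le), one_div,
            inv_mul_cancel₀ (ne_of_gt hα0), Real.rpow_one]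
  have hsxα : (0:ℝ) < (Real.sqrt 2 * x) ^ α := Real.rpow_pos_of_pos hsx α
  have hDle : dist u v ^ α ≤ (Real.sqrt 2 * x) ^ α :=
    Real.rpow_le_rpow dist_nonneg hvle hα0.le
  set B : ℝ := P / (Real.sqrt 2 * x) ^ α with hBdef
  have hQB : (1+ε) * β * 𝒩 ≤ B := by
    rw [hBdef, le_div_iff₀ hsxα]
    rw [le_div_iff₀ hQ] at hpow
    linarith [hpow]
  have hBD : B ≤ P / dist u v ^ α := div_le_div_of_nonneg_left hP.le hDα hDle
  have hfirst : (1+ε) * β * 𝒩 ≤ P / dist u v ^ α := le_trans hQB hBD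
  refine ⟨hfirst, ?_⟩
  set E := T.erase u with hEdef
  set cm : Pt → ℤ × ℤ := fun w =>
    ((gridCoord x w).1 - (gridCoord x u).1, (gridCoord x w).2 - (gridCoord x u).2) with hcmdef
  have hcm1 : ∀ w, (cm w).1 = (gridCoord x w).1 - (gridCoord x u).1 := fun w => rfl
  have hcm2 : ∀ w, (cm w).2 = (gridCoord x w).2 - (gridCoord x u).2 := fun w => rfl
  -- chebyshev norm lower bound
  have hN : ∀ w ∈ E, ((4 + M : ℕ) : ℤ) + 1 ≤ max |(cm w).1| |(cm w).2| := by
    intro w hw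
    have h1 : (4 + M : ℕ) ≤ boxDist (gridCoord x w) (gridCoord x u) :=
      hfar w (Finset.mem_of_mem_erase hw) (Finset.ne_of_mem_erase hw)
    rw [hcm1, hcm2]
    unfold boxDist at h1
    set m : ℤ := max |(gridCoord x w).1 - (gridCoord x u).1|
      |(gridCoord x w).2 - (gridCoord x u).2| with hm
    omega
  -- distance from interferer to v
  have hdw : ∀ w ∈ E, x * ((max |(cm w).1| |(cm w).2| : ℤ):ℝ) / 2 ≤ dist w v := by
    intro w hw
    have hNw := hN w hw
    set Nz : ℤ := max |(cm w).1| |(cm w).2| with hNz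
    have hN5 : (5:ℝ) ≤ (Nz:ℝ) := by exact_mod_cast le_trans (by omega : (5:ℤ) ≤ ((4+M:ℕ):ℤ)+1) hNw
    have hwu : x * (Nz:ℝ) - x ≤ dist w u := by
      have := grid_sep hx w u
      rw [hNz, hcm1, hcm2]
      exact this
    have hsqrt32 : Real.sqrt 2 ≤ 1.5 := by
      rw [show (1.5:ℝ) = Real.sqrt (1.5^2) from (Real.sqrt_sq (by norm_num)).symm]
      exact Real.sqrt_le_sqrt (by norm_num)
    have huv : dist u v ≤ 1.5 * x :=
      le_trans hvle (mul_le_mul_of_nonneg_right hsqrt32 hx.le)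
    have htri : dist w u ≤ dist w v + dist u v := by
      calc dist w u ≤ dist w v + dist v u := dist_triangle w v u
        _ = dist w v + dist u v := by rw [dist_comm v u]
    have h5x : x * 5 ≤ x * (Nz:ℝ) := mul_le_mul_of_nonneg_left hN5 hx.le
    linarith
  -- pointwise interference bound
  have hIw : ∀ w ∈ E, P / dist w v ^ α ≤ P * (2/x)^α * Gfun α (cm w) := by
    intro w hw
    have hNw := hN w hw
    set Nz : ℤ := max |(cm w).1| |(cm w).2| with hNz
    have hN5 : (5:ℝ) ≤ (Nz:ℝ) := by exact_mod_cast le_trans (by omega : (5:ℤ) ≤ ((4+M:ℕ):ℤ)+1) hNw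
    have hN0 : (0:ℝ) ≤ (Nz:ℝ) := by linarith
    have hd2 : x * (Nz:ℝ) / 2 ≤ dist w v := hdw w hw
    have hxN : (0:ℝ) < x * (Nz:ℝ) / 2 := by
      have h := mul_pos hx (show (0:ℝ) < (Nz:ℝ) by linarith)
      linarith
    have hcm0 : cm w ≠ 0 := by
      intro h
      have h1 : (cm w).1 = 0 := by rw [h]; rfl
      have h2 : (cm w).2 = 0 := by rw [h]; rfl
      rw [hNz, h1, h2] at hN5; norm_num at hN5
    have hG : Gfun α (cm w) = ((Nz:ℝ)) ^ (-α) := by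
      rw [Gfun, if_neg hcm0, hNz]
    have hrw : (x * (Nz:ℝ) / 2) ^ α ≤ dist w v ^ α :=
      Real.rpow_le_rpow hxN.le hd2 hα0.le
    have hpos : (0:ℝ) < (x * (Nz:ℝ) / 2) ^ α := Real.rpow_pos_of_pos hxN α
    calc P / dist w v ^ α ≤ P / (x * (Nz:ℝ) / 2) ^ α :=
          div_le_div_of_nonneg_left hP.le hpos hrw
      _ = P * (2/x)^α * ((Nz:ℝ)) ^ (-α) := by
          rw [show x * (Nz:ℝ) / 2 = (x/2) * (Nz:ℝ) by ring,
            Real.mul_rpow (by positivity) hN0,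
            show (2:ℝ)/x = (x/2)⁻¹ from (inv_div x 2).symm,
            Real.inv_rpow (by positivity), Real.rpow_neg hN0,
            div_eq_mul_inv, mul_inv]
          ring
      _ = P * (2/x)^α * Gfun α (cm w) := by rw [hG]
  -- group the sum
  have hgroup : ∑ w ∈ E, Gfun α (cm w)
      = ∑ y ∈ E.image cm, (E.filter (fun w => cm w = y)).card • Gfun α y :=
    Finset.sum_comp (Gfun α) cm
  have hfiber : ∀ y : ℤ × ℤ, (E.filter (fun w => cm w = y)).card ≤ k := by
    intro y
    refine le_trans (Finset.card_le_card ?_) (hbox (y.1 + (gridCoord x u).1, y.2 + (gridCoord x u).2))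
    intro w hw
    simp only [Finset.mem_filter, hEdef, Finset.mem_erase] at hw
    obtain ⟨⟨hwne, hwT⟩, hcmw⟩ := hw
    refine Finset.mem_filter.2 ⟨hwT, ?_⟩
    have h1 : (cm w).1 = y.1 := by rw [hcmw]
    have h2 : (cm w).2 = y.2 := by rw [hcmw]
    rw [hcm1] at h1; rw [hcm2] at h2
    apply Prod.ext <;> simp <;> omega
  have himage : ∀ y ∈ E.image cm, y ∉ s₀ := by
    intro y hy hys
    obtain ⟨w, hw, rfl⟩ := Finset.mem_image.1 hy
    have h1 := hN w hw
    have h2 : (max |(cm w).1| |(cm w).2|).toNat ≤ M := by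
      rw [hMdef]; exact Finset.le_sup (f := fun c => (max |c.1| |c.2|).toNat) hys
    set m : ℤ := max |(cm w).1| |(cm w).2| with hm
    omega
  -- H : the tail-restricted majorant
  set H : ℤ × ℤ → ℝ := fun c => if c ∈ s₀ then 0 else Gfun α c with hHdef
  have hH_nonneg : ∀ c, 0 ≤ H c := by
    intro c; rw [hHdef]; dsimp only; split_ifs
    · exact le_refl 0
    · exact Gfun_nonneg α c
  have hH_le : ∀ c, H c ≤ Gfun α c := by
    intro c; rw [hHdef]; dsimp only; split_ifs
    · exact Gfun_nonneg α c
    · exact le_refl _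
  have hH_sum : Summable H := Summable.of_nonneg_of_le hH_nonneg hH_le hG_sum
  have hsupp : Function.support H ⊆ {c : ℤ × ℤ | c ∉ s₀} := by
    intro c hc
    simp only [Function.mem_support, hHdef] at hc
    by_contra hcs
    simp only [Set.mem_setOf_eq, not_not] at hcs
    exact hc (by simp [hcs])
  have hsub : ∑' (c : {c : ℤ × ℤ // c ∉ s₀}), H c = ∑' c, H c :=
    tsum_subtype_eq_of_support_subset hsupp
  have htsumH : ∑' c, H c ≤ δ := by
    rw [← hsub]
    calc ∑' (c : {c : ℤ × ℤ // c ∉ s₀}), H ↑c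
        = ∑' (c : {c : ℤ × ℤ // c ∉ s₀}), Gfun α ↑c :=
          tsum_congr (fun c => by rw [hHdef]; simp [c.2])
      _ ≤ δ := le_of_lt htail
  have hsumE : ∑ w ∈ E, Gfun α (cm w) ≤ k * δ := by
    calc ∑ w ∈ E, Gfun α (cm w)
        = ∑ y ∈ E.image cm, (E.filter (fun w => cm w = y)).card • Gfun α y := hgroup
      _ ≤ ∑ y ∈ E.image cm, (k:ℝ) * Gfun α y := by
          apply Finset.sum_le_sum
          intro y hy
          rw [nsmul_eq_mul]
          exact mul_le_mul_of_nonneg_right (by exact_mod_cast hfiber y) (Gfun_nonneg α y)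
      _ = (k:ℝ) * ∑ y ∈ E.image cm, Gfun α y := by rw [Finset.mul_sum]
      _ = (k:ℝ) * ∑ y ∈ E.image cm, H y := by
          congr 1
          apply Finset.sum_congr rfl
          intro y hy
          rw [hHdef]; simp [himage y hy]
      _ ≤ (k:ℝ) * ∑' c, H c := by
          apply mul_le_mul_of_nonneg_left ?_ hk'.le
          exact Summable.sum_le_tsum (E.image cm) (fun c _ => hH_nonneg c) hH_sum
      _ ≤ (k:ℝ) * δ := mul_le_mul_of_nonneg_left htsumH hk'.le
  -- total interference bound
  have hEsum : ∑ w ∈ E, P / dist w v ^ α ≤ P * (2/x)^α * ((k:ℝ) * δ) := by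
    calc ∑ w ∈ E, P / dist w v ^ α ≤ ∑ w ∈ E, P * (2/x)^α * Gfun α (cm w) :=
          Finset.sum_le_sum hIw
      _ = P * (2/x)^α * ∑ w ∈ E, Gfun α (cm w) := by rw [Finset.mul_sum]
      _ ≤ P * (2/x)^α * ((k:ℝ) * δ) := by
          apply mul_le_mul_of_nonneg_left hsumE
          positivity
  -- final arithmetic
  set I : ℝ := ∑ w ∈ E, P / dist w v ^ α with hIdef
  have hxα : (0:ℝ) < x ^ α := Real.rpow_pos_of_pos hx α
  have hkey : (1+ε) * (β * (P * (2/x)^α * ((k:ℝ) * δ))) = ε * B := by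
    rw [hδdef, hBdef, Real.mul_rpow hs2.le hx.le, Real.div_rpow (by norm_num) hx.le]
    field_simp
  have h1 : (1+ε) * (β * 𝒩) ≤ B := by
    calc (1+ε) * (β * 𝒩) = (1+ε) * β * 𝒩 := by ring
      _ ≤ B := hQB
  have h2 : (1+ε) * (β * I) ≤ ε * B := by
    calc (1+ε) * (β * I) ≤ (1+ε) * (β * (P * (2/x)^α * ((k:ℝ) * δ))) := by
          apply mul_le_mul_of_nonneg_left (mul_le_mul_of_nonneg_left hEsum hβ0.le) h1ε.le
      _ = ε * B := hkey
  have h3 : (1+ε) * (β * (𝒩 + I)) ≤ (1+ε) * B := by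
    ring_nf
    ring_nf at h1 h2
    linarith
  have h4 : β * (𝒩 + I) ≤ B := le_of_mul_le_mul_left h3 h1ε
  linarith [hBD]
end
end

section
/- For every real α > 2, reals β ≥ 1, ε > 0, and every positive integer k, let d ≥ 1 be a natural number with the property of the main dilution lemma (i.e., silencing all boxes at box-distance less than d around a transmitter guarantees reception within distance √2·x). For all reals P > 0, 𝒩 > 0 and x > 0 with √2·x ≤ (P/((1+ε)·β·𝒩))^(1/α), let T be a finite set of stations in ℝ² containing at most k stations in each box of the grid G_x, let N be a positive integer, let ℓ : T → {1,…,N} be an injective labeling, and let F be an (N,c)-strongly selective family with c = k²·(2d+1)², assuming c ≤ N. Then for every station u ∈ T there exists a set A ∈ F such that ℓ(u) ∈ A and, letting T_A = {w ∈ T : ℓ(w) ∈ A} be the stations transmitting in the round corresponding to A, every point v ∈ ℝ² with 0 < dist(u,v) ≤ √2·x satisfies SINR(u,v,T_A) ≥ β and P/dist(u,v)^α ≥ (1+ε)·β·𝒩. In other words, by executing one (N,c)-ssf schedule, every station successfully transmits its message to all of its neighbors within distance √2·x in some round. -/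
noncomputable section
open scoped Classical

/-- An `(N,c)`-strongly selective family: a family `F` of subsets of `{1,…,N}` such that
for every nonempty `S ⊆ {1,…,N}` with `|S| ≤ c` and every `y ∈ S` there is `A ∈ F`
with `S ∩ A = {y}`. -/
def IsSSF (N c : ℕ) (F : Finset (Finset ℕ)) : Prop :=
  (∀ A ∈ F, A ⊆ Finset.Icc 1 N) ∧
  ∀ S : Finset ℕ, S ⊆ Finset.Icc 1 N → S.Nonempty → S.card ≤ c →
    ∀ y ∈ S, ∃ A ∈ F, S ∩ A = {y}

/-- **SSF-based dilution.** Let `d ≥ 1` have the property of the main dilution lemma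
(silencing all boxes at box-distance less than `d` around a transmitter guarantees
reception within distance `√2·x`).  Then for all `P, 𝒩, x > 0` with
`√2·x ≤ (P/((1+ε)·β·𝒩))^(1/α)`, every finite set `T` of stations with at most `k`
stations per box of `G_x`, every injective labeling `ℓ : T → {1,…,N}`, and every
`(N,c)`-ssf `F` with `c = k²·(2d+1)²` and `c ≤ N`: for every `u ∈ T` there is `A ∈ F`
with `ℓ u ∈ A` such that in the round corresponding to `A` (where the transmitting set is
`T_A = {w ∈ T : ℓ w ∈ A}`), every point `v` with `0 < dist u v ≤ √2·x` successfully
receives `u`'s message. -/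
theorem ssf_replaces_dilution
    (α β ε : ℝ) (hα : 2 < α) (hβ : 1 ≤ β) (hε : 0 < ε) (k : ℕ) (hk : 0 < k)
    (d : ℕ) (hd1 : 1 ≤ d)
    (hd : ∀ P 𝒩 x : ℝ, 0 < P → 0 < 𝒩 → 0 < x →
      Real.sqrt 2 * x ≤ (P / ((1 + ε) * β * 𝒩)) ^ (1 / α) →
      ∀ T : Finset Pt,
        (∀ ab : ℤ × ℤ, (T.filter (fun p => gridCoord x p = ab)).card ≤ k) →
        ∀ u ∈ T,
          (∀ w ∈ T, w ≠ u → d ≤ boxDist (gridCoord x w) (gridCoord x u)) →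
          ∀ v : Pt, 0 < dist u v → dist u v ≤ Real.sqrt 2 * x →
            (1 + ε) * β * 𝒩 ≤ P / dist u v ^ α ∧
            β * (𝒩 + ∑ w ∈ T.erase u, P / dist w v ^ α) ≤ P / dist u v ^ α) :
    ∀ P 𝒩 x : ℝ, 0 < P → 0 < 𝒩 → 0 < x →
      Real.sqrt 2 * x ≤ (P / ((1 + ε) * β * 𝒩)) ^ (1 / α) →
      ∀ T : Finset Pt,
        (∀ ab : ℤ × ℤ, (T.filter (fun p => gridCoord x p = ab)).card ≤ k) →
        ∀ N : ℕ, 0 < N →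
        ∀ ℓ : Pt → ℕ,
          (∀ p ∈ T, ℓ p ∈ Finset.Icc 1 N) →
          (∀ p ∈ T, ∀ q ∈ T, ℓ p = ℓ q → p = q) →
          ∀ F : Finset (Finset ℕ),
            k ^ 2 * (2 * d + 1) ^ 2 ≤ N →
            IsSSF N (k ^ 2 * (2 * d + 1) ^ 2) F →
            ∀ u ∈ T, ∃ A ∈ F, ℓ u ∈ A ∧
              ∀ v : Pt, 0 < dist u v → dist u v ≤ Real.sqrt 2 * x →
                (1 + ε) * β * 𝒩 ≤ P / dist u v ^ α ∧
                β * (𝒩 + ∑ w ∈ (T.filter (fun w => ℓ w ∈ A)).erase u, P / dist w v ^ α)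
                  ≤ P / dist u v ^ α := by
  intro P 𝒩 x hP h𝒩 hx hsx T hT N hN ℓ hℓmem hℓinj F hcN hF u hu
  set c₀ := gridCoord x u with hc₀
  set Tnear := T.filter (fun w => boxDist (gridCoord x w) c₀ < d) with hTnearDef
  have huNear : u ∈ Tnear := by
    rw [hTnearDef, Finset.mem_filter]
    refine ⟨hu, ?_⟩
    simp only [← hc₀, boxDist, sub_self, abs_zero, max_self]
    omega
  have hsubset : Tnear ⊆ (Finset.Icc (c₀.1 - d) (c₀.1 + d) ×ˢ
      Finset.Icc (c₀.2 - d) (c₀.2 + d)).biUnion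
      (fun ab => T.filter (fun p => gridCoord x p = ab)) := by
    intro w hw
    rw [hTnearDef, Finset.mem_filter] at hw
    obtain ⟨hwT, hwd⟩ := hw
    rw [Finset.mem_biUnion]
    refine ⟨gridCoord x w, ?_, by simp [hwT]⟩
    rw [Finset.mem_product, Finset.mem_Icc, Finset.mem_Icc]
    unfold boxDist at hwd
    rcases abs_cases ((gridCoord x w).1 - c₀.1) with ⟨h1, _⟩ | ⟨h1, _⟩ <;>
      rcases abs_cases ((gridCoord x w).2 - c₀.2) with ⟨h2, _⟩ | ⟨h2, _⟩ <;>
      rw [h1, h2] at hwd <;> omega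
  have hcard : Tnear.card ≤ k * (2 * d + 1) ^ 2 := by
    calc Tnear.card
        ≤ ((Finset.Icc (c₀.1 - d) (c₀.1 + d) ×ˢ Finset.Icc (c₀.2 - d) (c₀.2 + d)).biUnion
          (fun ab => T.filter (fun p => gridCoord x p = ab))).card :=
          Finset.card_le_card hsubset
      _ ≤ ∑ ab ∈ Finset.Icc (c₀.1 - d) (c₀.1 + d) ×ˢ Finset.Icc (c₀.2 - d) (c₀.2 + d),
            (T.filter (fun p => gridCoord x p = ab)).card := Finset.card_biUnion_le
      _ ≤ ∑ _ab ∈ Finset.Icc (c₀.1 - d) (c₀.1 + d) ×ˢ Finset.Icc (c₀.2 - d) (c₀.2 + d), k :=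
          Finset.sum_le_sum fun ab _ => hT ab
      _ = (Finset.Icc (c₀.1 - d) (c₀.1 + d) ×ˢ Finset.Icc (c₀.2 - d) (c₀.2 + d)).card * k := by
          rw [Finset.sum_const, smul_eq_mul]
      _ = k * (2 * d + 1) ^ 2 := by
          rw [Finset.card_product, Int.card_Icc, Int.card_Icc]
          have : (c₀.1 + ↑d + 1 - (c₀.1 - ↑d)).toNat = 2 * d + 1 := by omega
          have h2 : (c₀.2 + ↑d + 1 - (c₀.2 - ↑d)).toNat = 2 * d + 1 := by omega
          rw [this, h2]; ring
  set S := Tnear.image ℓ with hSdef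
  have hS1 : S ⊆ Finset.Icc 1 N := by
    intro y hy
    obtain ⟨w, hw, rfl⟩ := Finset.mem_image.mp hy
    exact hℓmem w (Finset.mem_of_mem_filter w hw)
  have hS2 : S.Nonempty := ⟨ℓ u, Finset.mem_image_of_mem _ huNear⟩
  have hS3 : S.card ≤ k ^ 2 * (2 * d + 1) ^ 2 := by
    refine le_trans Finset.card_image_le (le_trans hcard ?_)
    have : k ≤ k ^ 2 := Nat.le_self_pow (by norm_num) k
    exact Nat.mul_le_mul_right _ this
  obtain ⟨A, hAF, hSA⟩ := hF.2 S hS1 hS2 hS3 (ℓ u) (Finset.mem_image_of_mem _ huNear)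
  have hℓuA : ℓ u ∈ A := by
    have : ℓ u ∈ S ∩ A := hSA ▸ Finset.mem_singleton_self _
    exact (Finset.mem_inter.mp this).2
  refine ⟨A, hAF, hℓuA, ?_⟩
  set TA := T.filter (fun w => ℓ w ∈ A) with hTAdef
  have huTA : u ∈ TA := Finset.mem_filter.mpr ⟨hu, hℓuA⟩
  have hTA : ∀ ab : ℤ × ℤ, (TA.filter (fun p => gridCoord x p = ab)).card ≤ k := by
    intro ab
    refine le_trans (Finset.card_le_card ?_) (hT ab)
    intro p hp
    simp only [hTAdef, Finset.mem_filter] at hp ⊢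
    exact ⟨hp.1.1, hp.2⟩
  have hfar : ∀ w ∈ TA, w ≠ u → d ≤ boxDist (gridCoord x w) (gridCoord x u) := by
    intro w hw hwu
    by_contra hlt
    push_neg at hlt
    rw [hTAdef, Finset.mem_filter] at hw
    have hwnear : w ∈ Tnear := by
      rw [hTnearDef, Finset.mem_filter]
      exact ⟨hw.1, hlt⟩
    have : ℓ w ∈ S ∩ A := Finset.mem_inter.mpr ⟨Finset.mem_image_of_mem _ hwnear, hw.2⟩
    rw [hSA, Finset.mem_singleton] at this
    exact hwu (hℓinj w hw.1 u hu this)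
  exact fun v hv1 hv2 => hd P 𝒩 x hP h𝒩 hx hsx TA hTA u huTA hfar v hv1 hv2
end
end

section
/- Let x > 0, let k and d be positive integers, let T be a finite set of stations in ℝ² containing at most k stations in each box of the grid G_x, let N be a positive integer, let ℓ : T → {1,…,N} be an injective labeling, and let F be an (N,c)-strongly selective family for some integer c with k·(2d+1)² ≤ c ≤ N. Then for every station u ∈ T there exists a set A ∈ F such that ℓ(u) ∈ A and ℓ(w) ∉ A for every station w ∈ T with w ≠ u whose box is at box-distance strictly less than d from the box of u (including stations sharing u's box). That is, in some round of the execution of the (N,c)-ssf schedule, u transmits while all other stations in its box and in all boxes at box-distance less than d from its box are silent. -/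
noncomputable section
open scoped Classical

/-- **Selection by an ssf schedule.** If `T` has at most `k` stations per box of `G_x`,
`ℓ : T → {1,…,N}` is an injective labeling and `F` is an `(N,c)`-ssf with
`k·(2d+1)² ≤ c ≤ N`, then for every `u ∈ T` there is a round `A ∈ F` in which `u`
transmits (`ℓ u ∈ A`) while every other station of `T` whose box is at box-distance
strictly less than `d` from the box of `u` (including stations sharing `u`'s box)
is silent (`ℓ w ∉ A`). -/
theorem ssf_selects_locally
    (x : ℝ) (hx : 0 < x) (k d : ℕ) (hk : 0 < k) (hd : 0 < d)
    (T : Finset Pt)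
    (hdens : ∀ ab : ℤ × ℤ, (T.filter (fun p => gridCoord x p = ab)).card ≤ k)
    (N : ℕ) (hN : 0 < N)
    (ℓ : Pt → ℕ)
    (hℓ : ∀ p ∈ T, ℓ p ∈ Finset.Icc 1 N)
    (hinj : ∀ p ∈ T, ∀ q ∈ T, ℓ p = ℓ q → p = q)
    (c : ℕ) (hc₁ : k * (2 * d + 1) ^ 2 ≤ c) (hc₂ : c ≤ N)
    (F : Finset (Finset ℕ)) (hF : IsSSF N c F) :
    ∀ u ∈ T, ∃ A ∈ F, ℓ u ∈ A ∧
      ∀ w ∈ T, w ≠ u →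
        boxDist (gridCoord x w) (gridCoord x u) < d → ℓ w ∉ A := by
  obtain ⟨hF1, hF2⟩ := hF
  intro u hu
  set Tn := T.filter (fun w => boxDist (gridCoord x w) (gridCoord x u) < d) with hTn
  set S := Tn.image ℓ with hS
  have huTn : u ∈ Tn := by
    simp only [hTn, Finset.mem_filter]
    refine ⟨hu, ?_⟩
    simp [boxDist]
    omega
  have hSsub : S ⊆ Finset.Icc 1 N := by
    intro y hy
    simp only [hS, Finset.mem_image] at hy
    obtain ⟨p, hp, rfl⟩ := hy
    exact hℓ p (Finset.mem_filter.mp hp).1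
  have hSne : S.Nonempty := ⟨ℓ u, Finset.mem_image_of_mem _ huTn⟩
  set B : Finset (ℤ × ℤ) :=
    Finset.Icc ((gridCoord x u).1 - d) ((gridCoord x u).1 + d) ×ˢ
      Finset.Icc ((gridCoord x u).2 - d) ((gridCoord x u).2 + d) with hB
  have hcard : S.card ≤ c := by
    have h1 : S.card ≤ Tn.card := Finset.card_image_le
    have hsub : Tn ⊆ B.biUnion (fun ab => T.filter (fun p => gridCoord x p = ab)) := by
      intro w hw
      obtain ⟨hwT, hwd⟩ := Finset.mem_filter.mp hw
      rw [Finset.mem_biUnion]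
      refine ⟨gridCoord x w, ?_, by simp [hwT]⟩
      simp only [boxDist] at hwd
      have hmax : max |(gridCoord x w).1 - (gridCoord x u).1|
          |(gridCoord x w).2 - (gridCoord x u).2| ≤ d := by omega
      have h1 := le_trans (le_max_left _ _) hmax
      have h2 := le_trans (le_max_right _ _) hmax
      rw [abs_le] at h1 h2
      simp only [hB, Finset.mem_product, Finset.mem_Icc]
      omega
    have h2 : Tn.card ≤ B.card * k := by
      calc Tn.card ≤ (B.biUnion (fun ab => T.filter (fun p => gridCoord x p = ab))).card :=
            Finset.card_le_card hsub
        _ ≤ ∑ ab ∈ B, (T.filter (fun p => gridCoord x p = ab)).card :=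
            Finset.card_biUnion_le
        _ ≤ ∑ _ab ∈ B, k := Finset.sum_le_sum fun ab _ => hdens ab
        _ = B.card * k := by rw [Finset.sum_const, smul_eq_mul]
    have hBcard : B.card = (2 * d + 1) ^ 2 := by
      simp only [hB, Finset.card_product, Int.card_Icc]
      have : ((gridCoord x u).1 + d + 1 - ((gridCoord x u).1 - d)) = (2 * d + 1 : ℤ) := by
        ring
      rw [this]
      have : ((gridCoord x u).2 + d + 1 - ((gridCoord x u).2 - d)) = (2 * d + 1 : ℤ) := by
        ring
      rw [this]
      have h3 : (2 * (d:ℤ) + 1).toNat = 2 * d + 1 := by omega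
      rw [h3, sq]
    calc S.card ≤ B.card * k := le_trans h1 h2
      _ = k * (2 * d + 1) ^ 2 := by rw [hBcard, Nat.mul_comm]
      _ ≤ c := hc₁
  obtain ⟨A, hA, hSA⟩ := hF2 S hSsub hSne hcard (ℓ u) (Finset.mem_image_of_mem _ huTn)
  refine ⟨A, hA, ?_, ?_⟩
  · have : ℓ u ∈ S ∩ A := by rw [hSA]; simp
    exact (Finset.mem_inter.mp this).2
  · intro w hwT hwne hwd hwA
    have hwS : ℓ w ∈ S := by
      refine Finset.mem_image_of_mem _ ?_
      simp [hTn, hwT, hwd]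
    have : ℓ w ∈ S ∩ A := Finset.mem_inter.mpr ⟨hwS, hwA⟩
    rw [hSA, Finset.mem_singleton] at this
    exact hwne (hinj w hwT u hu this)
end
end

section
/- Let α > 2 be real, x > 0, P > 0, let k and d be positive integers, let v ∈ ℝ², and let T be a finite set of stations in ℝ² containing at most k stations in each box of the grid G_x and such that every station of T lies in a box at box-distance at least d from the box containing v. Then the total interference at v satisfies Σ_{w ∈ T} P/dist(w,v)^α ≤ (8·k·P/x^α)·c_d, where c_d = Σ_{i=d}^∞ (1/i^(α−1) + 1/i^α) (this series converges since α > 2) and dist is the Euclidean distance. -/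
noncomputable section

lemma coord_dist (w v : Pt) (i : Fin 2) : |w i - v i| ≤ dist w v := by
  rw [EuclideanSpace.dist_eq]
  have h : dist (w i) (v i) ^ 2 ≤ ∑ j, dist (w j) (v j) ^ 2 :=
    Finset.single_le_sum (f := fun j => dist (w j) (v j) ^ 2)
      (fun j _ => sq_nonneg _) (Finset.mem_univ i)
  have h2 : |w i - v i| = √(dist (w i) (v i) ^ 2) := by
    rw [Real.sqrt_sq dist_nonneg, Real.dist_eq]
  rw [h2]; exact Real.sqrt_le_sqrt h

lemma floor_gap (x : ℝ) (hx : 0 < x) (s t : ℝ) :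
    ((|⌊s/x⌋ - ⌊t/x⌋| - 1 : ℤ) : ℝ) * x ≤ |s - t| := by
  rcases le_or_gt (|⌊s/x⌋ - ⌊t/x⌋| - 1) 0 with h | h
  · have h0 : ((|⌊s/x⌋ - ⌊t/x⌋| - 1 : ℤ) : ℝ) ≤ 0 := by exact_mod_cast h
    have := mul_nonpos_of_nonpos_of_nonneg h0 hx.le
    linarith [abs_nonneg (s - t)]
  · wlog hab : ⌊t/x⌋ ≤ ⌊s/x⌋ generalizing s t
    · rw [abs_sub_comm (⌊s/x⌋) _, abs_sub_comm s t] at *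
      exact this t s h (by omega)
    have habs : |⌊s/x⌋ - ⌊t/x⌋| = ⌊s/x⌋ - ⌊t/x⌋ := abs_of_nonneg (by omega)
    rw [habs]
    have h1 : (⌊s/x⌋ : ℝ) * x ≤ s := by
      have h1' : (⌊s/x⌋ : ℝ) * x ≤ (s/x) * x := by
        have := Int.floor_le (s/x); gcongr
      rwa [div_mul_cancel₀ s hx.ne'] at h1'
    have h2 : t < ((⌊t/x⌋ : ℝ) + 1) * x := by
      have h2' : (t/x) * x < ((⌊t/x⌋ : ℝ) + 1) * x := by
        have := Int.lt_floor_add_one (t/x); gcongr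
      rwa [div_mul_cancel₀ t hx.ne'] at h2'
    have h3 : ((⌊s/x⌋ - ⌊t/x⌋ - 1 : ℤ) : ℝ) * x ≤ s - t := by
      push_cast; nlinarith
    linarith [le_abs_self (s - t)]

lemma dist_ge_box (x : ℝ) (hx : 0 < x) (w v : Pt) :
    (boxDist (gridCoord x w) (gridCoord x v) : ℝ) * x ≤ dist w v := by
  set a := |⌊w 0 / x⌋ - ⌊v 0 / x⌋| with ha
  set b := |⌊w 1 / x⌋ - ⌊v 1 / x⌋| with hb
  have hbox : (boxDist (gridCoord x w) (gridCoord x v) : ℤ) = max (max a b - 1) 0 := by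
    unfold boxDist gridCoord
    simp only [← ha, ← hb]
    omega
  rcases le_total (max a b - 1) 0 with h | h
  · have : (boxDist (gridCoord x w) (gridCoord x v) : ℤ) = 0 := by omega
    rw [show ((boxDist (gridCoord x w) (gridCoord x v) : ℝ)) = ((boxDist (gridCoord x w) (gridCoord x v) : ℤ) : ℝ) by push_cast; ring, this]
    simpa using dist_nonneg
  · have hval : (boxDist (gridCoord x w) (gridCoord x v) : ℤ) = max a b - 1 := by omega
    rcases le_total a b with hab | hab
    · have h1 := floor_gap x hx (w 1) (v 1)
      have h2 := coord_dist w v 1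
      have : ((max a b - 1 : ℤ) : ℝ) * x ≤ dist w v := by
        rw [max_eq_right hab]
        calc ((b - 1 : ℤ) : ℝ) * x ≤ |w 1 - v 1| := h1
          _ ≤ dist w v := h2
      rw [show ((boxDist (gridCoord x w) (gridCoord x v) : ℝ)) = ((boxDist (gridCoord x w) (gridCoord x v) : ℤ) : ℝ) by push_cast; ring, hval]
      exact this
    · have h1 := floor_gap x hx (w 0) (v 0)
      have h2 := coord_dist w v 0
      have : ((max a b - 1 : ℤ) : ℝ) * x ≤ dist w v := by
        rw [max_eq_left hab]
        calc ((a - 1 : ℤ) : ℝ) * x ≤ |w 0 - v 0| := h1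
          _ ≤ dist w v := h2
      rw [show ((boxDist (gridCoord x w) (gridCoord x v) : ℝ)) = ((boxDist (gridCoord x w) (gridCoord x v) : ℤ) : ℝ) by push_cast; ring, hval]
      exact this

def sqBox (c : ℤ × ℤ) (r : ℕ) : Finset (ℤ × ℤ) :=
  Finset.Icc (c.1 - r) (c.1 + r) ×ˢ Finset.Icc (c.2 - r) (c.2 + r)

lemma mem_sqBox {c a : ℤ × ℤ} {r : ℕ} :
    a ∈ sqBox c r ↔ |a.1 - c.1| ≤ r ∧ |a.2 - c.2| ≤ r := by
  simp [sqBox, Finset.mem_product, Finset.mem_Icc, abs_le]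
  omega

lemma card_sqBox (c : ℤ × ℤ) (r : ℕ) : (sqBox c r).card = (2*r+1)^2 := by
  simp [sqBox, Finset.card_product, Int.card_Icc]
  have : (c.1 + r + 1 - (c.1 - r)).toNat = 2*r+1 := by omega
  have h2 : (c.2 + r + 1 - (c.2 - r)).toNat = 2*r+1 := by omega
  rw [this, h2]; ring

lemma card_sphere (c : ℤ × ℤ) (r : ℕ) :
    (sqBox c (r+1) \ sqBox c r).card = 8*(r+1) := by
  have hsub : sqBox c r ⊆ sqBox c (r+1) := by
    intro a ha; rw [mem_sqBox] at *; push_cast at *; omega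
  rw [Finset.card_sdiff_of_subset hsub, card_sqBox, card_sqBox]
  ring_nf
  omega

lemma count_at_dist (x : ℝ) (k : ℕ) (v : Pt) (T : Finset Pt)
    (hdens : ∀ ab : ℤ × ℤ, (T.filter (fun p => gridCoord x p = ab)).card ≤ k)
    (m : ℕ) (hm : 1 ≤ m) :
    (T.filter (fun w => boxDist (gridCoord x w) (gridCoord x v) = m)).card
      ≤ 8*(m+1)*k := by
  classical
  set c₀ := gridCoord x v
  set S := sqBox c₀ (m+1) \ sqBox c₀ m with hS
  have hsub : T.filter (fun w => boxDist (gridCoord x w) c₀ = m)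
      ⊆ S.biUnion (fun c => T.filter (fun p => gridCoord x p = c)) := by
    intro w hw
    rw [Finset.mem_filter] at hw
    obtain ⟨hwT, hwm⟩ := hw
    rw [Finset.mem_biUnion]
    refine ⟨gridCoord x w, ?_, by simp [hwT]⟩
    have : max |(gridCoord x w).1 - c₀.1| |(gridCoord x w).2 - c₀.2| = m + 1 := by
      unfold boxDist at hwm; omega
    rw [hS, Finset.mem_sdiff, mem_sqBox, mem_sqBox]
    push_cast
    omega
  calc (T.filter (fun w => boxDist (gridCoord x w) c₀ = m)).card
      ≤ (S.biUnion (fun c => T.filter (fun p => gridCoord x p = c))).card :=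
        Finset.card_le_card hsub
    _ ≤ ∑ c ∈ S, (T.filter (fun p => gridCoord x p = c)).card :=
        Finset.card_biUnion_le
    _ ≤ ∑ _c ∈ S, k := Finset.sum_le_sum (fun c _ => hdens c)
    _ = 8*(m+1)*k := by rw [Finset.sum_const, card_sphere, smul_eq_mul]

/-- **Interference bound.** If `T` has at most `k` stations per box of `G_x` and every
station of `T` lies in a box at box-distance at least `d ≥ 1` from the box containing `v`,
then `Σ_{w ∈ T} P/dist(w,v)^α ≤ (8·k·P/x^α)·c_d`, where
`c_d = Σ_{i=d}^∞ (1/i^(α−1) + 1/i^α)` (written as a sum over `i : ℕ` of the terms at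
`i + d`; the series converges since `α > 2`). -/
theorem interference_bound
    (α : ℝ) (hα : 2 < α) (x P : ℝ) (hx : 0 < x) (hP : 0 < P)
    (k d : ℕ) (hk : 0 < k) (hd : 1 ≤ d) (v : Pt)
    (T : Finset Pt)
    (hdens : ∀ ab : ℤ × ℤ, (T.filter (fun p => gridCoord x p = ab)).card ≤ k)
    (hfar : ∀ w ∈ T, d ≤ boxDist (gridCoord x w) (gridCoord x v)) :
    ∑ w ∈ T, P / dist w v ^ α ≤
      8 * k * P / x ^ α *
        ∑' i : ℕ, (1 / ((i : ℝ) + d) ^ (α - 1) + 1 / ((i : ℝ) + d) ^ α) := by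
  classical
  have hα0 : (0:ℝ) ≤ α := by linarith
  set f : Pt → ℕ := fun w => boxDist (gridCoord x w) (gridCoord x v) with hf
  set g : ℕ → ℝ := fun m => 1 / (m:ℝ) ^ (α-1) + 1 / (m:ℝ) ^ α with hg
  set G : ℕ → ℝ := fun i => 1 / ((i:ℝ) + d) ^ (α-1) + 1 / ((i:ℝ) + d) ^ α with hG
  set img := T.image f with himg
  have himgd : ∀ m ∈ img, d ≤ m := by
    intro m hm
    obtain ⟨w, hw, rfl⟩ := Finset.mem_image.mp hm
    exact hfar w hw
  -- step 1 : pointwise bound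
  have hstep1 : ∀ w ∈ T, P / dist w v ^ α ≤ P / ((f w : ℝ) * x) ^ α := by
    intro w hw
    have hfw : 1 ≤ f w := le_trans hd (hfar w hw)
    have hpos : (0:ℝ) < (f w : ℝ) * x := by
      have : (1:ℝ) ≤ (f w : ℝ) := by exact_mod_cast hfw
      nlinarith
    have hle : (f w : ℝ) * x ≤ dist w v := dist_ge_box x hx w v
    have hmono := Real.rpow_le_rpow hpos.le hle hα0
    have hp2 := Real.rpow_pos_of_pos hpos α
    gcongr
  -- fiberwise
  have hfib : ∑ m ∈ img, ∑ w ∈ T.filter (fun w => f w = m), P / ((f w : ℝ) * x) ^ α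
      = ∑ w ∈ T, P / ((f w : ℝ) * x) ^ α :=
    Finset.sum_fiberwise_of_maps_to (fun w hw => Finset.mem_image_of_mem f hw) _
  have hinner : ∀ m ∈ img, ∑ w ∈ T.filter (fun w => f w = m), P / ((f w : ℝ) * x) ^ α
      = ((T.filter (fun w => f w = m)).card : ℝ) * (P / ((m:ℝ) * x) ^ α) := by
    intro m _
    rw [Finset.sum_congr rfl (fun w hw => by rw [(Finset.mem_filter.mp hw).2]),
      Finset.sum_const, nsmul_eq_mul]
  -- algebra
  have halg : ∀ m : ℕ, d ≤ m →
      ((8*(m+1)*k : ℕ) : ℝ) * (P / ((m:ℝ) * x) ^ α) = 8 * k * P / x ^ α * g m := by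
    intro m hm
    have hm0 : (0:ℝ) < m := by exact_mod_cast lt_of_lt_of_le Nat.zero_lt_one (le_trans hd hm)
    have hxα : (0:ℝ) < x ^ α := Real.rpow_pos_of_pos hx α
    have hmα : (0:ℝ) < (m:ℝ) ^ α := Real.rpow_pos_of_pos hm0 α
    have hmα1 : (0:ℝ) < (m:ℝ) ^ (α-1) := Real.rpow_pos_of_pos hm0 (α-1)
    have hsplit : (m:ℝ) ^ α = (m:ℝ) ^ (α-1) * m := by
      rw [← Real.rpow_add_one hm0.ne' (α-1)]; ring_nf
    rw [Real.mul_rpow hm0.le hx.le, hg]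
    simp only []
    rw [hsplit]
    push_cast
    field_simp
  -- card bound
  have hcard : ∀ m ∈ img, ((T.filter (fun w => f w = m)).card : ℝ) * (P / ((m:ℝ) * x) ^ α)
      ≤ ((8*(m+1)*k : ℕ) : ℝ) * (P / ((m:ℝ) * x) ^ α) := by
    intro m hm
    have hm1 : 1 ≤ m := le_trans hd (himgd m hm)
    have := count_at_dist x k v T hdens m hm1
    have hnn : (0:ℝ) ≤ P / ((m:ℝ) * x) ^ α := by
      apply div_nonneg hP.le
      exact Real.rpow_nonneg (by positivity) α
    exact mul_le_mul_of_nonneg_right (by exact_mod_cast this) hnn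
  -- summability of G
  have hsum1 : Summable (fun i : ℕ => 1 / ((i:ℝ) + d) ^ (α-1)) := by
    have h1 := (Real.summable_one_div_nat_rpow (p := α-1)).mpr (by linarith)
    exact ((summable_nat_add_iff d).mpr h1).congr (fun n => by push_cast; ring_nf)
  have hsum2 : Summable (fun i : ℕ => 1 / ((i:ℝ) + d) ^ α) := by
    have h1 := (Real.summable_one_div_nat_rpow (p := α)).mpr (by linarith)
    exact ((summable_nat_add_iff d).mpr h1).congr (fun n => by push_cast; ring_nf)
  have hsumG : Summable G := hsum1.add hsum2
  have hGnn : ∀ i, 0 ≤ G i := by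
    intro i
    have h1 : (0:ℝ) ≤ ((i:ℝ) + d) := by positivity
    have := Real.rpow_nonneg h1 (α-1)
    have := Real.rpow_nonneg h1 α
    simp only [hG]
    positivity
  -- finite sum ≤ tsum
  have hfin : ∑ m ∈ img, g m ≤ ∑' i, G i := by
    have hinj : ∀ m₁ ∈ img, ∀ m₂ ∈ img, m₁ - d = m₂ - d → m₁ = m₂ := by
      intro m₁ h₁ m₂ h₂ he
      have := himgd m₁ h₁
      have := himgd m₂ h₂
      omega
    have hkey : ∑ j ∈ img.image (fun m => m - d), G j = ∑ m ∈ img, g m := by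
      rw [Finset.sum_image hinj]
      apply Finset.sum_congr rfl
      intro m hm
      have hdm := himgd m hm
      have hc : ((m - d : ℕ) : ℝ) + d = (m : ℝ) := by
        push_cast [Nat.cast_sub hdm]; ring
      simp only [hG, hg, hc]
    rw [← hkey]
    exact Summable.sum_le_tsum _ (fun i _ => hGnn i) hsumG
  have hconst : (0:ℝ) ≤ 8 * k * P / x ^ α := by
    have := Real.rpow_pos_of_pos hx α
    positivity
  calc ∑ w ∈ T, P / dist w v ^ α
      ≤ ∑ w ∈ T, P / ((f w : ℝ) * x) ^ α := Finset.sum_le_sum hstep1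
    _ = ∑ m ∈ img, ∑ w ∈ T.filter (fun w => f w = m), P / ((f w : ℝ) * x) ^ α := hfib.symm
    _ = ∑ m ∈ img, ((T.filter (fun w => f w = m)).card : ℝ) * (P / ((m:ℝ) * x) ^ α) :=
        Finset.sum_congr rfl hinner
    _ ≤ ∑ m ∈ img, ((8*(m+1)*k : ℕ) : ℝ) * (P / ((m:ℝ) * x) ^ α) :=
        Finset.sum_le_sum hcard
    _ = ∑ m ∈ img, 8 * k * P / x ^ α * g m :=
        Finset.sum_congr rfl (fun m hm => halg m (himgd m hm))
    _ = 8 * k * P / x ^ α * ∑ m ∈ img, g m := by rw [Finset.mul_sum]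
    _ ≤ 8 * k * P / x ^ α * ∑' i, G i := mul_le_mul_of_nonneg_left hfin hconst
end
end

section
/- There exists an absolute constant K > 0 such that for all positive integers N and c with 2 ≤ c ≤ N, there exists an (N,c)-strongly selective family F of subsets of {1,…,N} with |F| ≤ K·c²·log N. -/
noncomputable section

open Finset

private def tfun (N c : ℕ) (S : Finset (Fin N)) (y : Fin N) (i : Fin N) : Finset ℕ :=
  if i = y then {0} else if i ∈ S then (Finset.range c).erase 0 else Finset.range c

private lemma tfun_subset (N c : ℕ) (hc : 0 < c) (S : Finset (Fin N)) (y : Fin N) (i : Fin N) :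
    tfun N c S y i ⊆ Finset.range c := by
  unfold tfun
  split_ifs with h1 h2
  · intro x hx; simp at hx; simp [hx, hc]
  · exact erase_subset _ _
  · exact subset_rfl

private lemma pow_ratio_bound (c k : ℕ) (hc : 2 ≤ c) (hk : k ≤ c - 1) :
    (c : ℝ) ^ k ≤ 4 * ((c : ℝ) - 1) ^ k := by
  have hc' : (2:ℝ) ≤ (c:ℝ) := by exact_mod_cast hc
  have h0 : (0:ℝ) < (c:ℝ) - 1 := by linarith
  have hkr : (k:ℝ) ≤ (c:ℝ) - 1 := by
    have : (k:ℝ) ≤ ((c-1 : ℕ) : ℝ) := by exact_mod_cast hk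
    rwa [Nat.cast_sub (by omega), Nat.cast_one] at this
  have hx : (c:ℝ) ≤ ((c:ℝ)-1) * Real.exp (1/((c:ℝ)-1)) := by
    have h := Real.add_one_le_exp (1/((c:ℝ)-1))
    have h2 := mul_le_mul_of_nonneg_left h h0.le
    calc (c:ℝ) = ((c:ℝ)-1) * (1/((c:ℝ)-1) + 1) := by field_simp; ring
    _ ≤ ((c:ℝ)-1) * Real.exp (1/((c:ℝ)-1)) := h2
  calc (c:ℝ)^k ≤ (((c:ℝ)-1) * Real.exp (1/((c:ℝ)-1)))^k := by
        exact pow_le_pow_left₀ (by positivity) hx k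
  _ = ((c:ℝ)-1)^k * Real.exp (1/((c:ℝ)-1))^k := mul_pow _ _ _
  _ = ((c:ℝ)-1)^k * Real.exp (k * (1/((c:ℝ)-1))) := by rw [Real.exp_nat_mul]
  _ ≤ ((c:ℝ)-1)^k * Real.exp 1 := by
        gcongr
        rw [mul_one_div, div_le_one h0]
        exact hkr
  _ ≤ 4 * ((c:ℝ)-1)^k := by
        have := Real.exp_one_lt_d9
        nlinarith [pow_nonneg h0.le k]

private lemma good_card (N c : ℕ) (hc : 0 < c) (S : Finset (Fin N)) (y : Fin N) (hy : y ∈ S) :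
    (Fintype.piFinset (tfun N c S y)).card = (c-1)^(S.card - 1) * c^(N - S.card) := by
  rw [Fintype.card_piFinset]
  have hw : ∀ i : Fin N, (tfun N c S y i).card =
      if i = y then 1 else if i ∈ S then c - 1 else c := by
    intro i
    unfold tfun
    split_ifs <;> simp [Finset.card_erase_of_mem, Finset.mem_range, hc]
  simp_rw [hw]
  rw [← Finset.prod_mul_prod_compl S]
  have h1 : ∏ i ∈ S, (if i = y then 1 else if i ∈ S then c - 1 else c) = (c-1)^(S.card - 1) := by
    rw [← Finset.mul_prod_erase S _ hy, if_pos rfl, one_mul]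
    rw [Finset.prod_congr rfl (fun i hi => ?_), Finset.prod_const, Finset.card_erase_of_mem hy]
    rw [if_neg (Finset.ne_of_mem_erase hi), if_pos (Finset.mem_of_mem_erase hi)]
  have h2 : ∏ i ∈ Sᶜ, (if i = y then 1 else if i ∈ S then c - 1 else c) = c^(N - S.card) := by
    rw [Finset.prod_congr rfl (fun i hi => ?_), Finset.prod_const, Finset.card_compl,
      Fintype.card_fin]
    rw [Finset.mem_compl] at hi
    have : i ≠ y := fun h => hi (h ▸ hy)
    rw [if_neg this, if_neg hi]
  rw [h1, h2]


private lemma good_lower (N c : ℕ) (hc : 2 ≤ c) (hcN : c ≤ N) (S : Finset (Fin N)) (y : Fin N)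
    (hy : y ∈ S) (hs : S.card ≤ c) :
    (c:ℝ)^N ≤ 4 * c * ((Fintype.piFinset (tfun N c S y)).card : ℝ) := by
  rw [good_card N c (by omega) S y hy]
  have hs1 : 1 ≤ S.card := Finset.card_pos.2 ⟨y, hy⟩
  have hsN : S.card ≤ N := hs.trans hcN
  push_cast [Nat.cast_sub (by omega : 1 ≤ c)]
  have hsplit : (c:ℝ)^N = (c:ℝ) * (c:ℝ)^(S.card - 1) * (c:ℝ)^(N - S.card) := by
    have hN : 1 + (S.card - 1) + (N - S.card) = N := by omega
    conv_lhs => rw [← hN]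
    rw [pow_add, pow_add, pow_one]
  rw [hsplit]
  have h1 : (c:ℝ)^(S.card - 1) ≤ 4 * ((c:ℝ)-1)^(S.card - 1) :=
    pow_ratio_bound c (S.card - 1) hc (by omega)
  have hc0 : (0:ℝ) ≤ (c:ℝ) := by positivity
  have hp0 : (0:ℝ) ≤ (c:ℝ)^(N - S.card) := by positivity
  nlinarith [mul_le_mul_of_nonneg_left h1 hc0, mul_le_mul_of_nonneg_right
    (mul_le_mul_of_nonneg_left h1 hc0) hp0]

private lemma bad_bound (N c : ℕ) (hc : 2 ≤ c) (hcN : c ≤ N) (S : Finset (Fin N)) (y : Fin N)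
    (hy : y ∈ S) (hs : S.card ≤ c) :
    (((Fintype.piFinset fun _ : Fin N => Finset.range c) \
        Fintype.piFinset (tfun N c S y)).card : ℝ) ≤ (1 - 1/(4*(c:ℝ))) * (c:ℝ)^N := by
  have hsub : Fintype.piFinset (tfun N c S y) ⊆ Fintype.piFinset fun _ : Fin N => Finset.range c :=
    Fintype.piFinset_subset _ _ (tfun_subset N c (by omega) S y)
  have hΩ : (Fintype.piFinset fun _ : Fin N => Finset.range c).card = c ^ N := by
    simp [Fintype.card_piFinset]
  rw [Finset.card_sdiff_of_subset hsub, Nat.cast_sub (Finset.card_le_card hsub), hΩ]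
  have hlow := good_lower N c hc hcN S y hy hs
  have hc0 : (0:ℝ) < (c:ℝ) := by positivity
  push_cast
  rw [sub_mul, one_mul]
  have : (c:ℝ)^N / (4*c) ≤ ((Fintype.piFinset (tfun N c S y)).card : ℝ) := by
    rw [div_le_iff₀ (by positivity)]
    linarith [hlow]
  have heq : 1/(4*(c:ℝ)) * (c:ℝ)^N = (c:ℝ)^N / (4*c) := by ring
  linarith [heq ▸ this]

private lemma exists_good (N c m : ℕ) (hc : 2 ≤ c) (hcN : c ≤ N)
    (hm : 4*(c:ℝ)*((c:ℝ)+3) * Real.log N < m) :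
    ∃ ω : Fin m → Fin N → ℕ, ∀ S : Finset (Fin N), ∀ y ∈ S, S.card ≤ c →
      ∃ j, (ω j) ∈ Fintype.piFinset (tfun N c S y) := by
  classical
  set ΩJ : Finset (Fin N → ℕ) := Fintype.piFinset fun _ => Finset.range c with hΩJ
  have hΩJcard : ΩJ.card = c ^ N := by simp [hΩJ, Fintype.card_piFinset]
  set Ω : Finset (Fin m → Fin N → ℕ) := Fintype.piFinset fun _ => ΩJ with hΩdef
  have hΩcard : Ω.card = (c ^ N) ^ m := by simp [hΩdef, Fintype.card_piFinset, hΩJcard]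
  by_contra hcon
  push_neg at hcon
  set P : Finset (Finset (Fin N) × Fin N) :=
    Finset.univ.filter (fun p => p.2 ∈ p.1 ∧ p.1.card ≤ c) with hP
  set BadP : Finset (Fin N) × Fin N → Finset (Fin m → Fin N → ℕ) :=
    fun p => Fintype.piFinset fun _ : Fin m => ΩJ \ Fintype.piFinset (tfun N c p.1 p.2) with hBadP
  have hsub : Ω ⊆ P.biUnion BadP := by
    intro ω hω
    obtain ⟨S, y, hy, hs, hbad⟩ := hcon ω
    rw [Finset.mem_biUnion]
    refine ⟨(S, y), by simp [hP, hy, hs], ?_⟩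
    rw [hBadP]
    rw [Fintype.mem_piFinset]
    intro j
    rw [Finset.mem_sdiff]
    exact ⟨Fintype.mem_piFinset.1 hω j, hbad j⟩
  have hcard : Ω.card ≤ ∑ p ∈ P, (BadP p).card :=
    (Finset.card_le_card hsub).trans (Finset.card_biUnion_le)
  have hN0 : (0:ℝ) < N := by
    have : 0 < N := by omega
    exact_mod_cast this
  have hc0 : (0:ℝ) < c := by
    have : 0 < c := by omega
    exact_mod_cast this
  -- bound each BadP term in ℝ
  have hterm : ∀ p ∈ P, ((BadP p).card : ℝ) ≤ ((1 - 1/(4*(c:ℝ))) * (c:ℝ)^N)^m := by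
    intro p hp
    rw [hP, Finset.mem_filter] at hp
    have hcardBP : (BadP p).card = ((ΩJ \ Fintype.piFinset (tfun N c p.1 p.2)).card)^m := by
      simp [hBadP, Fintype.card_piFinset]
    rw [hcardBP]
    push_cast
    exact pow_le_pow_left₀ (by positivity) (bad_bound N c hc hcN p.1 p.2 hp.2.1 hp.2.2) m
  -- bound number of pairs
  have hPcard : P.card ≤ N^(c+3) := by
    have h1 : P ⊆ (Finset.univ.filter (fun S : Finset (Fin N) => S.card ≤ c)) ×ˢ
        (Finset.univ : Finset (Fin N)) := by
      intro p hp
      rw [hP, Finset.mem_filter] at hp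
      simp [Finset.mem_product, hp.2.2]
    have h2 : (Finset.univ.filter (fun S : Finset (Fin N) => S.card ≤ c)) ⊆
        (Finset.range (c+1)).biUnion (fun s => Finset.powersetCard s Finset.univ) := by
      intro S hS
      rw [Finset.mem_filter] at hS
      rw [Finset.mem_biUnion]
      exact ⟨S.card, Finset.mem_range.2 (by omega),
        Finset.mem_powersetCard.2 ⟨Finset.subset_univ _, rfl⟩⟩
    have h3 : (Finset.univ.filter (fun S : Finset (Fin N) => S.card ≤ c)).card ≤ (c+1) * N^c := by
      calc _ ≤ ((Finset.range (c+1)).biUnion (fun s => Finset.powersetCard s Finset.univ)).card :=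
            Finset.card_le_card h2
      _ ≤ ∑ s ∈ Finset.range (c+1), (Finset.powersetCard s (Finset.univ : Finset (Fin N))).card :=
            Finset.card_biUnion_le
      _ ≤ ∑ s ∈ Finset.range (c+1), N^c := by
            refine Finset.sum_le_sum (fun s hs => ?_)
            rw [Finset.card_powersetCard, Finset.card_univ, Fintype.card_fin]
            calc N.choose s ≤ N^s := Nat.choose_le_pow N s
            _ ≤ N^c := Nat.pow_le_pow_right (by omega) (by
                  rw [Finset.mem_range] at hs; omega)
      _ = (c+1) * N^c := by rw [Finset.sum_const, Finset.card_range, smul_eq_mul]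
    calc P.card ≤ _ := Finset.card_le_card h1
    _ = (Finset.univ.filter (fun S : Finset (Fin N) => S.card ≤ c)).card * N := by
        rw [Finset.card_product, Finset.card_univ, Fintype.card_fin]
    _ ≤ ((c+1) * N^c) * N := Nat.mul_le_mul_right _ h3
    _ ≤ (N * N * N^c) * N := by
        have : c + 1 ≤ N * N := by nlinarith
        exact Nat.mul_le_mul_right _ (Nat.mul_le_mul_right _ this)
    _ = N^(c+3) := by ring
  have he0 : (0:ℝ) ≤ 1 - 1/(4*(c:ℝ)) := by
    have : 1/(4*(c:ℝ)) ≤ 1/(4*2) := by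
      apply one_div_le_one_div_of_le (by norm_num)
      have : (2:ℝ) ≤ c := by exact_mod_cast hc
      linarith
    linarith
  -- the key real inequality
  have hkey : (N:ℝ)^(c+3) * (1 - 1/(4*(c:ℝ)))^m < 1 := by
    have he1 : 1 - 1/(4*(c:ℝ)) ≤ Real.exp (-(1/(4*(c:ℝ)))) := by
      have := Real.add_one_le_exp (-(1/(4*(c:ℝ))))
      linarith
    have he2 : (1 - 1/(4*(c:ℝ)))^m ≤ Real.exp (-(m/(4*(c:ℝ)))) := by
      calc (1 - 1/(4*(c:ℝ)))^m ≤ Real.exp (-(1/(4*(c:ℝ))))^m :=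
            pow_le_pow_left₀ he0 he1 m
      _ = Real.exp ((m:ℕ) * (-(1/(4*(c:ℝ))))) := (Real.exp_nat_mul _ m).symm
      _ = Real.exp (-(m/(4*(c:ℝ)))) := by congr 1; ring
    have he3 : (N:ℝ)^(c+3) = Real.exp ((c+3 : ℕ) * Real.log N) := by
      rw [Real.exp_nat_mul, Real.exp_log hN0]
    calc (N:ℝ)^(c+3) * (1 - 1/(4*(c:ℝ)))^m
        ≤ Real.exp ((c+3 : ℕ) * Real.log N) * Real.exp (-(m/(4*(c:ℝ)))) := by
          rw [← he3]
          exact mul_le_mul_of_nonneg_left he2 (by positivity)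
    _ = Real.exp ((c+3 : ℕ) * Real.log N - m/(4*(c:ℝ))) := by
          rw [← Real.exp_add]; ring_nf
    _ < 1 := by
          apply Real.exp_lt_one_iff.2
          rw [sub_neg]
          rw [lt_div_iff₀ (by positivity)]
          push_cast
          calc ((c:ℝ)+3) * Real.log N * (4*c) = 4*(c:ℝ)*((c:ℝ)+3) * Real.log N := by ring
          _ < m := hm
  -- assemble the contradiction
  have hfinal : ((c:ℝ)^N)^m ≤ (N:ℝ)^(c+3) * ((1 - 1/(4*(c:ℝ))) * (c:ℝ)^N)^m := by
    calc ((c:ℝ)^N)^m = (Ω.card : ℝ) := by rw [hΩcard]; push_cast; ring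
    _ ≤ ((∑ p ∈ P, (BadP p).card : ℕ) : ℝ) := by exact_mod_cast hcard
    _ = ∑ p ∈ P, ((BadP p).card : ℝ) := by push_cast; rfl
    _ ≤ ∑ p ∈ P, ((1 - 1/(4*(c:ℝ))) * (c:ℝ)^N)^m := Finset.sum_le_sum hterm
    _ = P.card * ((1 - 1/(4*(c:ℝ))) * (c:ℝ)^N)^m := by
        rw [Finset.sum_const, nsmul_eq_mul]
    _ ≤ (N:ℝ)^(c+3) * ((1 - 1/(4*(c:ℝ))) * (c:ℝ)^N)^m := by
        have hle : (P.card : ℝ) ≤ (N:ℝ)^(c+3) := by exact_mod_cast hPcard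
        exact mul_le_mul_of_nonneg_right hle (pow_nonneg (mul_nonneg he0 (by positivity)) m)
  have hpos : (0:ℝ) < ((c:ℝ)^N)^m := by positivity
  rw [mul_pow] at hfinal
  have : ((c:ℝ)^N)^m * 1 < ((c:ℝ)^N)^m * 1 := by
    calc ((c:ℝ)^N)^m * 1 = ((c:ℝ)^N)^m := mul_one _
    _ ≤ (N:ℝ)^(c+3) * ((1 - 1/(4*(c:ℝ)))^m * ((c:ℝ)^N)^m) := hfinal
    _ = ((N:ℝ)^(c+3) * (1 - 1/(4*(c:ℝ)))^m) * ((c:ℝ)^N)^m := by ring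
    _ < 1 * ((c:ℝ)^N)^m := by
        exact mul_lt_mul_of_pos_right hkey hpos
    _ = ((c:ℝ)^N)^m * 1 := by ring
  exact lt_irrefl _ this


/-- **Existence of small strongly selective families** (Clementi–Monti–Silvestri):
there is an absolute constant `K > 0` such that for all `2 ≤ c ≤ N` there exists an
`(N,c)`-strongly selective family of size at most `K·c²·log N`. -/
theorem exists_small_ssf :
    ∃ K : ℝ, 0 < K ∧
      ∀ N c : ℕ, 2 ≤ c → c ≤ N →
        ∃ F : Finset (Finset ℕ), IsSSF N c F ∧
          (F.card : ℝ) ≤ K * (c : ℝ) ^ 2 * Real.log N := by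
  classical
  refine ⟨13, by norm_num, ?_⟩
  intro N c hc hcN
  have hN2 : 2 ≤ N := hc.trans hcN
  have hNr : (2:ℝ) ≤ N := by exact_mod_cast hN2
  have hlog : 0 < Real.log N := Real.log_pos (by linarith)
  have hcr : (2:ℝ) ≤ c := by exact_mod_cast hc
  set m : ℕ := Nat.floor (12 * (c:ℝ)^2 * Real.log N) + 1 with hmdef
  have hm : 4*(c:ℝ)*((c:ℝ)+3) * Real.log N < m := by
    have h1 : 4*(c:ℝ)*((c:ℝ)+3) * Real.log N ≤ 12 * (c:ℝ)^2 * Real.log N := by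
      have : 4*(c:ℝ)*((c:ℝ)+3) ≤ 12 * (c:ℝ)^2 := by nlinarith
      exact mul_le_mul_of_nonneg_right this hlog.le
    have h2 : 12 * (c:ℝ)^2 * Real.log N < m := by
      rw [hmdef]
      push_cast
      exact Nat.lt_floor_add_one _
    linarith
  obtain ⟨ω, hω⟩ := exists_good N c m hc hcN hm
  refine ⟨(Finset.univ : Finset (Fin m)).image (fun j =>
    (Finset.univ.filter fun i : Fin N => ω j i = 0).image (fun i : Fin N => (i:ℕ)+1)), ⟨?_, ?_⟩, ?_⟩
  · intro A hA
    rw [Finset.mem_image] at hA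
    obtain ⟨j, -, rfl⟩ := hA
    intro x hx
    rw [Finset.mem_image] at hx
    obtain ⟨i, -, rfl⟩ := hx
    rw [Finset.mem_Icc]
    have h2 : (i:ℕ) < N := i.2
    omega
  · intro S hS hSne hScard y hy
    have hyIcc := hS hy
    rw [Finset.mem_Icc] at hyIcc
    set y' : Fin N := ⟨y - 1, by omega⟩ with hy'
    have hy'val : (y' : ℕ) + 1 = y := by
      have : (y' : ℕ) = y - 1 := rfl
      omega
    set S' : Finset (Fin N) := Finset.univ.filter (fun i : Fin N => (i:ℕ)+1 ∈ S) with hS'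
    have hy'S' : y' ∈ S' := by
      rw [hS', Finset.mem_filter]
      exact ⟨Finset.mem_univ _, hy'val ▸ hy⟩
    have hinj : Function.Injective (fun i : Fin N => (i:ℕ)+1) := by
      intro a b hab
      simp only at hab
      exact Fin.ext (by omega)
    have hS'card : S'.card ≤ c := by
      have h1 : S'.image (fun i : Fin N => (i:ℕ)+1) ⊆ S := by
        intro x hx
        rw [Finset.mem_image] at hx
        obtain ⟨i, hi, rfl⟩ := hx
        rw [hS', Finset.mem_filter] at hi
        exact hi.2
      calc S'.card = (S'.image (fun i : Fin N => (i:ℕ)+1)).card :=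
            (Finset.card_image_of_injective _ hinj).symm
      _ ≤ S.card := Finset.card_le_card h1
      _ ≤ c := hScard
    obtain ⟨j, hj⟩ := hω S' y' hy'S' hS'card
    rw [Fintype.mem_piFinset] at hj
    unfold tfun at hj
    have hgy : ω j y' = 0 := by
      have h := hj y'
      rw [if_pos rfl, Finset.mem_singleton] at h
      exact h
    have hgne : ∀ i ∈ S', i ≠ y' → ω j i ≠ 0 := by
      intro i hiS hiy
      have h := hj i
      rw [if_neg hiy, if_pos hiS] at h
      exact Finset.ne_of_mem_erase h
    refine ⟨(Finset.univ.filter fun i : Fin N => ω j i = 0).image (fun i : Fin N => (i:ℕ)+1),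
      Finset.mem_image.2 ⟨j, Finset.mem_univ _, rfl⟩, ?_⟩
    ext x
    simp only [Finset.mem_inter, Finset.mem_singleton, Finset.mem_image, Finset.mem_filter,
      Finset.mem_univ, true_and]
    constructor
    · rintro ⟨hxS, i, hgi, rfl⟩
      have hiS' : i ∈ S' := by
        rw [hS', Finset.mem_filter]
        exact ⟨Finset.mem_univ _, hxS⟩
      have hiy : i = y' := by
        by_contra hne
        exact hgne i hiS' hne hgi
      rw [hiy, hy'val]
    · rintro rfl
      exact ⟨hy, y', hgy, hy'val⟩
  · have hcard : ((Finset.univ : Finset (Fin m)).image (fun j =>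
        (Finset.univ.filter fun i : Fin N => ω j i = 0).image (fun i : Fin N => (i:ℕ)+1))).card ≤ m := by
      calc _ ≤ (Finset.univ : Finset (Fin m)).card := Finset.card_image_le
      _ = m := by simp
    have h1 : (m:ℝ) ≤ 12 * (c:ℝ)^2 * Real.log N + 1 := by
      rw [hmdef]
      push_cast
      have := Nat.floor_le (by positivity : (0:ℝ) ≤ 12 * (c:ℝ)^2 * Real.log N)
      linarith
    have h2 : (1:ℝ) ≤ (c:ℝ)^2 * Real.log N := by
      have hl2 : Real.log 2 ≤ Real.log N := Real.log_le_log (by norm_num) hNr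
      have := Real.log_two_gt_d9
      nlinarith
    calc (_ : ℝ) ≤ (m:ℝ) := by exact_mod_cast hcard
    _ ≤ 12 * (c:ℝ)^2 * Real.log N + 1 := h1
    _ ≤ 13 * (c:ℝ)^2 * Real.log N := by nlinarith
end
end
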